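/- Let k be a real 3×3 matrix with kᵀΛk = Λ and det k = 1 (i.e. k ∈ K), and suppose the first column of k equals (v, 0, 0)ᵀ for some v ∈ ℝ. Then v ≠ 0 and there exists a unique a ∈ ℝ such that k = [[v, a, a²/(2v)], [0, 1, a/v], [0, 0, 1/v]]. Conversely, for every v ∈ ℝ with v ≠ 0 and every a ∈ ℝ, the matrix [[v, a, a²/(2v)], [0, 1, a/v], [0, 0, 1/v]] satisfies kᵀΛk = Λ, det k = 1, and has first column (v,0,0)ᵀ. -/

import Mathlib

open Matrix

/-- The bilinear form of the light cone: `Λ = [[0,0,−1],[0,1,0],[−1,0,0]]`. -/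
def lightConeLambda : Matrix (Fin 3) (Fin 3) ℝ := !![0, 0, -1; 0, 1, 0; -1, 0, 0]

/-- The matrix `[[v, a, a²/(2v)], [0, 1, a/v], [0, 0, 1/v]]`. -/
noncomputable def isotropyMat (v a : ℝ) : Matrix (Fin 3) (Fin 3) ℝ :=
  !![v, a, a ^ 2 / (2 * v); 0, 1, a / v; 0, 0, 1 / v]

/-- The elements of `K = {k : kᵀΛk = Λ, det k = 1}` whose first column is `(v,0,0)ᵀ`
are exactly the matrices `[[v, a, a²/(2v)], [0, 1, a/v], [0, 0, 1/v]]` with `v ≠ 0`,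
`a ∈ ℝ`, `a` being uniquely determined. -/
theorem isotropy_elements_of_K :
    (∀ (k : Matrix (Fin 3) (Fin 3) ℝ) (v : ℝ),
      kᵀ * lightConeLambda * k = lightConeLambda → k.det = 1 →
      k 0 0 = v → k 1 0 = 0 → k 2 0 = 0 →
      v ≠ 0 ∧ ∃! a : ℝ, k = isotropyMat v a) ∧
    (∀ v : ℝ, v ≠ 0 → ∀ a : ℝ,
      (isotropyMat v a)ᵀ * lightConeLambda * isotropyMat v a = lightConeLambda ∧
      (isotropyMat v a).det = 1 ∧
      isotropyMat v a 0 0 = v ∧ isotropyMat v a 1 0 = 0 ∧ isotropyMat v a 2 0 = 0) := by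
  constructor
  · intro k v hK hd h00 h10 h20
    have E : ∀ i j : Fin 3, (kᵀ * lightConeLambda * k) i j = lightConeLambda i j := by
      rw [hK]; intros; rfl
    have e02 := E 0 2
    have e01 := E 0 1
    have e12 := E 1 2
    have e22 := E 2 2
    simp [lightConeLambda, Matrix.mul_apply, Fin.sum_univ_three, Matrix.vecHead,
      Matrix.vecTail, h00, h10, h20] at e02 e01 e12 e22
    have hv : v ≠ 0 := by rintro rfl; simp at e02
    have h21 : k 2 1 = 0 := e01.resolve_left hv
    rw [Matrix.det_fin_three, h10, h20, h21, h00] at hd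
    have h22 : k 2 2 = 1 / v := by field_simp; linarith [e02]
    have h11 : k 1 1 = 1 := by
      rw [h22] at hd; field_simp at hd
      have hm : v * (k 1 1 - 1) = 0 := by linear_combination hd
      rcases mul_eq_zero.1 hm with h | h
      · exact absurd h hv
      · linarith
    rw [h21, h11, h22] at e12; rw [h22] at e22
    have h12 : k 1 2 = k 0 1 / v := by field_simp at e12 ⊢; linarith
    have h02 : k 0 2 = (k 0 1) ^ 2 / (2 * v) := by
      field_simp at e22 ⊢
      have hv2 : v ^ 2 ≠ 0 := pow_ne_zero 2 hv
      have key : (k 0 2 * (2 * v)) * v ^ 2 = (k 0 1 ^ 2) * v ^ 2 := by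
        rw [h12] at e22; field_simp at e22; linear_combination (-v ^ 2) * e22
      exact mul_right_cancel₀ hv2 (by linear_combination key)
    refine ⟨hv, k 0 1, ?_, fun a ha => by rw [ha]; simp [isotropyMat]⟩
    ext i j
    fin_cases i <;> fin_cases j <;>
      simp [isotropyMat, Matrix.vecHead, Matrix.vecTail, h00, h10, h20, h21, h11, h22,
        h12, h02]
  · intro v hv a
    refine ⟨?_, ?_, rfl, rfl, rfl⟩
    · ext i j
      fin_cases i <;> fin_cases j <;>
        simp [isotropyMat, lightConeLambda, Matrix.mul_apply, Fin.sum_univ_three,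
          Matrix.vecHead, Matrix.vecTail] <;>
        field_simp <;> ring
    · rw [Matrix.det_fin_three, isotropyMat]
      norm_num [Matrix.vecHead, Matrix.vecTail]
      simp [hv]
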